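/- arXiv:2304.13454 — 2 statements merged into one kernel-verified Lean document; each statement's English description precedes it below -/
import Mathlib

section
/- For i = 1,…,m let φᵢ° be norms on ℝ², each twice continuously differentiable on ℝ² ∖ {0}, let σᵢ ∈ C²([0,1]; ℝ²) with σᵢ'(x) ≠ 0 for all x and with a common endpoint σ₁(1) = σ₂(1) = ⋯ = σₘ(1) = Q, and let βᵢ ∈ C²([0,1]; ℝ²) satisfy βᵢ(0) = 0 for all i and βᵢ(1) = v for a common vector v ∈ ℝ². Set νᵢ = σᵢ'^⊥/|σᵢ'|, Nᵢ(x) = ∇φᵢ°(σᵢ'(x)^⊥), κ^{φᵢ} = Nᵢ'·σᵢ'/|σᵢ'|². Then s ↦ Σᵢ₌₁ᵐ ∫₀¹ φᵢ°((σᵢ'(x) + s βᵢ'(x))^⊥) dx is differentiable at s = 0 with derivative Σᵢ₌₁ᵐ ∫₀¹ (βᵢ·νᵢ) κ^{φᵢ} |σᵢ'| dx − v · Σᵢ₌₁ᵐ Nᵢ(1)^⊥. -/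
noncomputable section
open Set

abbrev E2 : Type := EuclideanSpace ℝ (Fin 2)

/-- counterclockwise 90°-rotation of a vector in the plane -/
def perp (a : E2) : E2 := WithLp.toLp 2 ![-(a 1), a 0]

local notation "⟪" x ", " y "⟫" => @inner ℝ _ _ x y

/-- Cahn-Hoffman vector field `N(x) = ∇φ°(σ'(x)^⊥)` of a parametrized curve. -/
def CH (φ : E2 → ℝ) (σ : ℝ → E2) (x : ℝ) : E2 :=
  gradient φ (perp (derivWithin σ (Set.Icc 0 1) x))

/-- unit normal `ν(x) = σ'(x)^⊥ / |σ'(x)|` -/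
def nor (σ : ℝ → E2) (x : ℝ) : E2 :=
  ‖derivWithin σ (Set.Icc 0 1) x‖⁻¹ • perp (derivWithin σ (Set.Icc 0 1) x)

/-- anisotropic curvature `κ^φ(x) = N'(x)·σ'(x)/|σ'(x)|²` -/
def curv (φ : E2 → ℝ) (σ : ℝ → E2) (x : ℝ) : ℝ :=
  ⟪derivWithin (CH φ σ) (Set.Icc 0 1) x, derivWithin σ (Set.Icc 0 1) x⟫ /
    ‖derivWithin σ (Set.Icc 0 1) x‖ ^ 2

set_option linter.unusedTactic false
set_option linter.unreachableTactic false
set_option linter.unnecessarySeqFocus false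

lemma perp_zero_iff (a : E2) : perp a = 0 ↔ a = 0 := by
  constructor
  · intro h
    ext i
    have h0 := congrArg (fun z : E2 => z 0) h
    have h1 := congrArg (fun z : E2 => z 1) h
    simp [perp] at h0 h1
    fin_cases i <;> simpa
  · rintro rfl; ext i; fin_cases i <;> simp [perp]

def perpL : E2 →L[ℝ] E2 :=
  LinearMap.toContinuousLinearMap
    { toFun := perp
      map_add' := by
        intro a b; ext i; fin_cases i <;> simp [perp] <;> ring
      map_smul' := by
        intro c a; ext i; fin_cases i <;> simp [perp] <;> ring }

lemma perpL_apply (a : E2) : perpL a = perp a := rfl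

lemma inner_perp_swap (a b : E2) : ⟪a, perp b⟫ = -⟪perp a, b⟫ := by
  simp [perp, PiLp.inner_apply, Fin.sum_univ_two, RCLike.inner_apply]

lemma key_2d_identity (u w b : E2) :
    ⟪u, perp b⟫ * ⟪w, w⟫ = ⟪u, w⟫ * ⟪w, perp b⟫ + ⟪u, perp w⟫ * ⟪perp w, perp b⟫ := by
  simp [perp, PiLp.inner_apply, Fin.sum_univ_two, RCLike.inner_apply]
  simp only [EuclideanSpace.norm_sq_eq, Fin.sum_univ_two, Real.norm_eq_abs, sq_abs]
  ring

lemma norm_perp (a : E2) : ‖perp a‖ = ‖a‖ := by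
  simp [EuclideanSpace.norm_eq, perp, Fin.sum_univ_two]
  ring_nf

lemma inner_gradient (f : E2 → ℝ) (x u : E2) : ⟪gradient f x, u⟫ = fderiv ℝ f x u :=
  InnerProductSpace.toDual_symm_apply

lemma gradient_contDiffOn {φ : E2 → ℝ} (hφ : ContDiffOn ℝ 2 φ {(0:E2)}ᶜ) :
    ContDiffOn ℝ 1 (gradient φ) {(0:E2)}ᶜ := by
  have hf' : ContDiffOn ℝ 1 (fderiv ℝ φ) {(0:E2)}ᶜ :=
    hφ.fderiv_of_isOpen isOpen_compl_singleton (by norm_num)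
  exact ((InnerProductSpace.toDual ℝ E2).symm.contDiff).comp_contDiffOn hf'

lemma euler_identity {φ : E2 → ℝ} (hφ_hom : ∀ (c : ℝ) (x : E2), φ (c • x) = |c| * φ x)
    (p : E2) (hd : DifferentiableAt ℝ φ p) : ⟪gradient φ p, p⟫ = φ p := by
  have h1 : HasDerivAt (fun c : ℝ => φ (c • p)) (fderiv ℝ φ p p) 1 := by
    have hs : HasDerivAt (fun c : ℝ => c • p) p 1 := by
      simpa using (hasDerivAt_id (1:ℝ)).smul_const p
    have hd' : HasFDerivAt φ (fderiv ℝ φ p) ((1:ℝ) • p) := by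
      rw [one_smul]; exact hd.hasFDerivAt
    exact hd'.comp_hasDerivAt (1:ℝ) hs
  have h2 : (fun c : ℝ => φ (c • p)) =ᶠ[nhds 1] fun c => c * φ p := by
    filter_upwards [isOpen_Ioi.eventually_mem (show (0:ℝ) < 1 by norm_num)] with c hc
    rw [hφ_hom, abs_of_pos hc]
  have h3 : HasDerivAt (fun c : ℝ => c * φ p) (φ p) 1 := by
    simpa using (hasDerivAt_id (1:ℝ)).mul_const (φ p)
  have h4 : HasDerivAt (fun c : ℝ => φ (c • p)) (φ p) 1 := h3.congr_of_eventuallyEq h2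
  rw [inner_gradient]
  exact h1.unique h4

lemma perp_zero : perp (0:E2) = 0 := (perp_zero_iff 0).2 rfl

theorem curve_var (φ : E2 → ℝ)
    (hφ_hom : ∀ (c : ℝ) (x : E2), φ (c • x) = |c| * φ x)
    (hφ_smooth : ContDiffOn ℝ 2 φ {(0:E2)}ᶜ)
    (σ β : ℝ → E2)
    (hσ : ContDiffOn ℝ 2 σ (Set.Icc 0 1))
    (hβ : ContDiffOn ℝ 2 β (Set.Icc 0 1))
    (hreg : ∀ x ∈ Set.Icc (0:ℝ) 1, derivWithin σ (Set.Icc 0 1) x ≠ 0)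
    (v : E2) (hβ0 : β 0 = 0) (hβ1 : β 1 = v) :
    HasDerivAt
      (fun s : ℝ => ∫ x in (0:ℝ)..1,
        φ (perp (derivWithin σ (Set.Icc 0 1) x + s • derivWithin β (Set.Icc 0 1) x)))
      ((∫ x in (0:ℝ)..1,
          ⟪β x, nor σ x⟫ * curv φ σ x * ‖derivWithin σ (Set.Icc 0 1) x‖)
        - ⟪v, perp (CH φ σ 1)⟫) 0 := by
  have un : UniqueDiffOn ℝ (Set.Icc (0:ℝ) 1) := uniqueDiffOn_Icc one_pos
  set I := Set.Icc (0:ℝ) 1 with hI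
  set sd := derivWithin σ I with hsd
  set bd := derivWithin β I with hbd
  have hsub : Set.uIoc (0:ℝ) 1 ⊆ I := by
    rw [Set.uIoc_of_le zero_le_one]; exact Set.Ioc_subset_Icc_self
  have hσd : ContDiffOn ℝ 1 sd I := hσ.derivWithin un (by norm_num)
  have hβd : ContDiffOn ℝ 1 bd I := hβ.derivWithin un (by norm_num)
  have hσdc : ContinuousOn sd I := hσd.continuousOn
  have hβdc : ContinuousOn bd I := hβd.continuousOn
  have hg1 : ContDiffOn ℝ 1 (gradient φ) {(0:E2)}ᶜ := gradient_contDiffOn hφ_smooth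
  have hgc : ContinuousOn (gradient φ) {(0:E2)}ᶜ := hg1.continuousOn
  have hφc : ContinuousOn φ {(0:E2)}ᶜ := hφ_smooth.continuousOn
  have hφdiff : ∀ p : E2, p ≠ 0 → DifferentiableAt ℝ φ p := by
    intro p hp
    have hmem : {(0:E2)}ᶜ ∈ nhds p := isOpen_compl_singleton.mem_nhds (by simpa using hp)
    exact (hφ_smooth.contDiffAt hmem).differentiableAt (by norm_num)
  -- lower bound on ‖σ'‖ and upper bound on ‖β'‖
  obtain ⟨x₀, hx₀I, hx₀min⟩ :=
    isCompact_Icc.exists_isMinOn (Set.nonempty_Icc.2 zero_le_one) hσdc.norm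
  set c := ‖sd x₀‖ with hc
  have hcpos : 0 < c := norm_pos_iff.2 (hreg x₀ hx₀I)
  have hcle : ∀ x ∈ I, c ≤ ‖sd x‖ := fun x hx => hx₀min hx
  obtain ⟨M, hM⟩ := isCompact_Icc.exists_bound_of_continuousOn hβdc
  have hM0 : 0 ≤ M := le_trans (norm_nonneg _) (hM 0 (by simp [hI]))
  set ε := c / (M + 1) with hε
  have hεpos : 0 < ε := div_pos hcpos (by linarith)
  have hεM : ε * M < c := by
    rw [hε, div_mul_eq_mul_div, div_lt_iff₀ (by linarith)]
    nlinarith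
  have key : ∀ s : ℝ, |s| ≤ ε → ∀ x ∈ I, sd x + s • bd x ≠ 0 := by
    intro s hs x hx h0
    have h1 : ‖s • bd x‖ ≤ ε * M := by
      rw [norm_smul, Real.norm_eq_abs]
      exact mul_le_mul hs (hM x hx) (norm_nonneg _) (le_trans (abs_nonneg s) hs)
    have h2 : sd x = -(s • bd x) := eq_neg_of_add_eq_zero_left h0
    have h3 : ‖sd x‖ ≤ ε * M := by rw [h2, norm_neg]; exact h1
    exact absurd (lt_of_le_of_lt h3 hεM) (not_lt.2 (hcle x hx))
  -- compact image and bound for the gradient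
  set T : Set (ℝ × ℝ) := I ×ˢ Set.Icc (-ε) ε with hT
  set Φ : ℝ × ℝ → E2 := fun q => perp (sd q.1 + q.2 • bd q.1) with hΦ
  have hΦc : ContinuousOn Φ T := by
    apply perpL.continuous.comp_continuousOn
    exact (hσdc.comp continuous_fst.continuousOn fun q hq => hq.1).add
      (continuous_snd.continuousOn.smul
        (hβdc.comp continuous_fst.continuousOn fun q hq => hq.1))
  have hKc : IsCompact (Φ '' T) := ((isCompact_Icc.prod isCompact_Icc).image_of_continuousOn hΦc)
  have hK0 : Φ '' T ⊆ {(0:E2)}ᶜ := by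
    rintro _ ⟨q, hq, rfl⟩
    simp only [Set.mem_compl_iff, Set.mem_singleton_iff, hΦ]
    intro h
    exact key q.2 (abs_le.2 ⟨hq.2.1, hq.2.2⟩) q.1 hq.1 ((perp_zero_iff _).1 h)
  obtain ⟨C, hC⟩ := hKc.exists_bound_of_continuousOn (hgc.mono hK0)
  set F' : ℝ → ℝ → ℝ :=
    fun s x => ⟪gradient φ (perp (sd x + s • bd x)), perp (bd x)⟫ with hF'
  -- differentiation under the integral sign
  have hmeas : ∀ᶠ s in nhds (0:ℝ), MeasureTheory.AEStronglyMeasurable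
      ((fun s x => φ (perp (sd x + s • bd x))) s) (MeasureTheory.volume.restrict (Set.uIoc 0 1)) := by
    filter_upwards [Metric.ball_mem_nhds (0:ℝ) hεpos] with s hs
    rw [mem_ball_zero_iff, Real.norm_eq_abs] at hs
    apply ContinuousOn.aestronglyMeasurable _ measurableSet_uIoc
    apply ContinuousOn.mono _ hsub
    apply hφc.comp
    · exact perpL.continuous.comp_continuousOn
        (hσdc.add (continuousOn_const.fun_smul hβdc))
    · intro x hx
      simp only [Set.mem_compl_iff, Set.mem_singleton_iff]
      intro h
      exact key s hs.le x hx ((perp_zero_iff _).1 h)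
  have hint : IntervalIntegrable (fun x => φ (perp (sd x + (0:ℝ) • bd x)))
      MeasureTheory.volume 0 1 := by
    apply ContinuousOn.intervalIntegrable_of_Icc zero_le_one
    apply hφc.comp
    · exact perpL.continuous.comp_continuousOn
        (hσdc.add (continuousOn_const.fun_smul hβdc))
    · intro x hx
      simp only [Set.mem_compl_iff, Set.mem_singleton_iff]
      intro h
      exact key 0 (by simpa using hεpos.le) x hx ((perp_zero_iff _).1 h)
  have hmeas' : MeasureTheory.AEStronglyMeasurable (F' 0)
      (MeasureTheory.volume.restrict (Set.uIoc 0 1)) := by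
    apply ContinuousOn.aestronglyMeasurable _ measurableSet_uIoc
    apply ContinuousOn.mono _ hsub
    apply ContinuousOn.inner
    · apply hgc.comp
      · exact perpL.continuous.comp_continuousOn
          (hσdc.add (continuousOn_const.fun_smul hβdc))
      · intro x hx
        simp only [Set.mem_compl_iff, Set.mem_singleton_iff]
        intro h
        exact key 0 (by simpa using hεpos.le) x hx ((perp_zero_iff _).1 h)
    · exact perpL.continuous.comp_continuousOn hβdc
  have hbound : ∀ᵐ x ∂MeasureTheory.volume, x ∈ Set.uIoc (0:ℝ) 1 →
      ∀ s ∈ Metric.ball (0:ℝ) ε, ‖F' s x‖ ≤ C * M := by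
    apply Filter.Eventually.of_forall
    intro x hx s hs
    rw [mem_ball_zero_iff, Real.norm_eq_abs] at hs
    have hxI : x ∈ I := hsub hx
    have hmem : perp (sd x + s • bd x) ∈ Φ '' T :=
      ⟨(x, s), ⟨hxI, by constructor <;> [linarith [abs_le.1 hs.le]; linarith [abs_le.1 hs.le]]⟩, rfl⟩
    have h1 : ‖gradient φ (perp (sd x + s • bd x))‖ ≤ C := hC _ hmem
    have h2 : ‖perp (bd x)‖ ≤ M := by rw [norm_perp]; exact hM x hxI
    calc ‖F' s x‖ ≤ ‖gradient φ (perp (sd x + s • bd x))‖ * ‖perp (bd x)‖ :=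
          norm_inner_le_norm _ _
      _ ≤ C * M := mul_le_mul h1 h2 (norm_nonneg _) (le_trans (norm_nonneg _) h1)
  have hbint : IntervalIntegrable (fun _ : ℝ => C * M) MeasureTheory.volume 0 1 :=
    intervalIntegrable_const
  have hdiff : ∀ᵐ x ∂MeasureTheory.volume, x ∈ Set.uIoc (0:ℝ) 1 →
      ∀ s ∈ Metric.ball (0:ℝ) ε, HasDerivAt (fun s => φ (perp (sd x + s • bd x))) (F' s x) s := by
    apply Filter.Eventually.of_forall
    intro x hx s hs
    rw [mem_ball_zero_iff, Real.norm_eq_abs] at hs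
    have hxI : x ∈ I := hsub hx
    have hne : sd x + s • bd x ≠ 0 := key s hs.le x hxI
    have hd := hφdiff _ (fun h => hne ((perp_zero_iff _).1 h))
    have hlin : HasDerivAt (fun y : ℝ => sd x + y • bd x) (bd x) s := by
      simpa using ((hasDerivAt_id s).smul_const (bd x)).const_add (sd x)
    have hperp : HasDerivAt (fun y : ℝ => perp (sd x + y • bd x)) (perp (bd x)) s :=
      perpL.hasFDerivAt.comp_hasDerivAt s hlin
    have := hd.hasFDerivAt.comp_hasDerivAt s hperp
    rw [hF']
    simp only []
    rw [show ⟪gradient φ (perp (sd x + s • bd x)), perp (bd x)⟫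
        = fderiv ℝ φ (perp (sd x + s • bd x)) (perp (bd x)) from inner_gradient _ _ _]
    exact this
  have main :=
    intervalIntegral.hasDerivAt_integral_of_dominated_loc_of_deriv_le (μ := MeasureTheory.volume)
      (F := fun s x => φ (perp (sd x + s • bd x))) (F' := F') (x₀ := (0:ℝ))
      (a := 0) (b := 1) (bound := fun _ => C * M) (Metric.ball_mem_nhds (0:ℝ) hεpos) hmeas hint hmeas' hbound hbint hdiff
  -- now rewrite the value of the derivative
  have hval : (∫ x in (0:ℝ)..1, F' 0 x) =
      (∫ x in (0:ℝ)..1, ⟪β x, nor σ x⟫ * curv φ σ x * ‖sd x‖) - ⟪v, perp (CH φ σ 1)⟫ := by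
    set N := CH φ σ with hN
    set Nd := derivWithin (CH φ σ) I with hNdd
    have hmaps : Set.MapsTo (fun x => perp (sd x)) I {(0:E2)}ᶜ := by
      intro x hx
      simp only [Set.mem_compl_iff, Set.mem_singleton_iff]
      intro h
      exact hreg x hx ((perp_zero_iff _).1 h)
    have hwCD : ContDiffOn ℝ 1 (fun x => perp (sd x)) I := perpL.contDiff.comp_contDiffOn hσd
    have hN1 : ContDiffOn ℝ 1 N I := hg1.comp hwCD hmaps
    have hNc : ContinuousOn N I := hN1.continuousOn
    have hNdc : ContinuousOn Nd I := hN1.continuousOn_derivWithin un le_rfl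
    have hβc : ContinuousOn β I := hβ.continuousOn
    have horth : ∀ x ∈ I, ⟪Nd x, perp (sd x)⟫ = 0 := by
      intro x hx
      have hpne : perp (sd x) ≠ 0 := fun h => hreg x hx ((perp_zero_iff _).1 h)
      have hσd2 : HasDerivWithinAt sd (derivWithin sd I x) I x :=
        (hσd.differentiableOn one_ne_zero x hx).hasDerivWithinAt
      have hw_d : HasDerivWithinAt (fun y => perp (sd y)) (perp (derivWithin sd I x)) I x :=
        perpL.hasFDerivAt.comp_hasDerivWithinAt x hσd2
      have hN_d : HasDerivWithinAt N (Nd x) I x :=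
        (hN1.differentiableOn one_ne_zero x hx).hasDerivWithinAt
      have hA : HasDerivWithinAt (fun y => ⟪N y, perp (sd y)⟫)
          (⟪N x, perp (derivWithin sd I x)⟫ + ⟪Nd x, perp (sd x)⟫) I x :=
        hN_d.inner ℝ hw_d
      have hB : HasDerivWithinAt (fun y => φ (perp (sd y)))
          (fderiv ℝ φ (perp (sd x)) (perp (derivWithin sd I x))) I x :=
        ((hφdiff _ hpne).hasFDerivAt).comp_hasDerivWithinAt x hw_d
      have hEq : Set.EqOn (fun y => ⟪N y, perp (sd y)⟫) (fun y => φ (perp (sd y))) I := by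
        intro y hy
        exact euler_identity hφ_hom _ (hφdiff _ (fun h => hreg y hy ((perp_zero_iff _).1 h)))
      have h1 := hA.derivWithin (un x hx)
      have h2 := hB.derivWithin (un x hx)
      have h3 : derivWithin (fun y => ⟪N y, perp (sd y)⟫) I x
          = derivWithin (fun y => φ (perp (sd y))) I x := derivWithin_congr hEq (hEq hx)
      rw [h1, h2] at h3
      have h4 : fderiv ℝ φ (perp (sd x)) (perp (derivWithin sd I x))
          = ⟪N x, perp (derivWithin sd I x)⟫ := (inner_gradient _ _ _).symm
      rw [h4] at h3
      linarith
    have hpt : ∀ x ∈ I, ⟪Nd x, perp (β x)⟫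
        = -(⟪β x, nor σ x⟫ * curv φ σ x * ‖sd x‖) := by
      intro x hx
      have hid := key_2d_identity (Nd x) (sd x) (β x)
      rw [horth x hx, zero_mul, add_zero] at hid
      have hn : ‖sd x‖ ≠ 0 := norm_ne_zero_iff.2 (hreg x hx)
      have hss : ⟪sd x, sd x⟫ = ‖sd x‖ ^ 2 := real_inner_self_eq_norm_sq _
      have hswap : ⟪sd x, perp (β x)⟫ = -⟪β x, perp (sd x)⟫ := by
        rw [inner_perp_swap, real_inner_comm]
      rw [hss, hswap] at hid
      have hnor : nor σ x = ‖sd x‖⁻¹ • perp (sd x) := rfl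
      have hcurv : curv φ σ x = ⟪Nd x, sd x⟫ / ‖sd x‖ ^ 2 := rfl
      rw [hnor, hcurv, real_inner_smul_right]
      set a := (⟪Nd x, perp (β x)⟫ : ℝ) with hA
      set b := (⟪Nd x, sd x⟫ : ℝ) with hB
      set d := (⟪β x, perp (sd x)⟫ : ℝ) with hD
      set n := ‖sd x‖ with hNN
      have h6 : a = b * -d / n ^ 2 := (eq_div_iff (pow_ne_zero 2 hn)).2 hid
      rw [h6, show n⁻¹ * d * (b / n ^ 2) * n = n⁻¹ * n * (d * (b / n ^ 2)) by ring,
        inv_mul_cancel₀ hn, one_mul]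
      ring
    have hperpβc : ContinuousOn (fun x => perp (β x)) I := perpL.continuous.comp_continuousOn hβc
    have hgcont : ContinuousOn (fun x => ⟪N x, perp (β x)⟫) I := hNc.inner hperpβc
    have hderiv : ∀ x ∈ Set.Ioo (0:ℝ) 1, HasDerivAt (fun y => ⟪N y, perp (β y)⟫)
        (⟪N x, perp (bd x)⟫ + ⟪Nd x, perp (β x)⟫) x := by
      intro x hx
      have hxI : x ∈ I := Set.Ioo_subset_Icc_self hx
      have hN_d : HasDerivWithinAt N (Nd x) I x :=
        (hN1.differentiableOn one_ne_zero x hxI).hasDerivWithinAt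
      have hβ_d : HasDerivWithinAt β (bd x) I x :=
        (hβ.differentiableOn (by norm_num) x hxI).hasDerivWithinAt
      have hpβ : HasDerivWithinAt (fun y => perp (β y)) (perp (bd x)) I x :=
        perpL.hasFDerivAt.comp_hasDerivWithinAt x hβ_d
      exact (hN_d.inner ℝ hpβ).hasDerivAt (Icc_mem_nhds hx.1 hx.2)
    have hi1 : IntervalIntegrable (fun x => ⟪N x, perp (bd x)⟫) MeasureTheory.volume 0 1 :=
      ContinuousOn.intervalIntegrable_of_Icc zero_le_one
        (hNc.inner (perpL.continuous.comp_continuousOn hβdc))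
    have hi2 : IntervalIntegrable (fun x => ⟪Nd x, perp (β x)⟫) MeasureTheory.volume 0 1 :=
      ContinuousOn.intervalIntegrable_of_Icc zero_le_one (hNdc.inner hperpβc)
    have hftc : (∫ x in (0:ℝ)..1, (⟪N x, perp (bd x)⟫ + ⟪Nd x, perp (β x)⟫))
        = ⟪N 1, perp v⟫ := by
      rw [intervalIntegral.integral_eq_sub_of_hasDerivAt_of_le zero_le_one hgcont hderiv
        (hi1.add hi2)]
      rw [hβ0, hβ1, perp_zero]
      simp
    have hsplit : (∫ x in (0:ℝ)..1, (⟪N x, perp (bd x)⟫ + ⟪Nd x, perp (β x)⟫))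
        = (∫ x in (0:ℝ)..1, ⟪N x, perp (bd x)⟫) + ∫ x in (0:ℝ)..1, ⟪Nd x, perp (β x)⟫ :=
      intervalIntegral.integral_add hi1 hi2
    have hbulk : (∫ x in (0:ℝ)..1, ⟪Nd x, perp (β x)⟫)
        = -∫ x in (0:ℝ)..1, ⟪β x, nor σ x⟫ * curv φ σ x * ‖sd x‖ := by
      rw [← intervalIntegral.integral_neg]
      apply intervalIntegral.integral_congr
      intro x hx
      rw [Set.uIcc_of_le zero_le_one] at hx
      exact hpt x hx
    have hF0 : Set.EqOn (F' 0) (fun x => ⟪N x, perp (bd x)⟫) (Set.uIcc (0:ℝ) 1) := by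
      intro x _
      show (⟪gradient φ (perp (sd x + (0:ℝ) • bd x)), perp (bd x)⟫ : ℝ) = _
      rw [zero_smul, add_zero]
      rfl
    rw [intervalIntegral.integral_congr hF0]
    have hbdry : ⟪N 1, perp v⟫ = -⟪v, perp (N 1)⟫ := by
      rw [inner_perp_swap, real_inner_comm]
    linarith [hftc, hsplit, hbulk, hbdry]
  rw [← hval]
  exact main.2


/-- First variation of the anisotropic length of a network of `m` regular `C²` curves
meeting at a common `m`-tuple junction `Q` (Corollary 3.2 of the paper, parametrized form). -/
theorem first_variation_at_junction
    (m : ℕ)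
    (φ : Fin m → E2 → ℝ)
    (hφ_triangle : ∀ i, ∀ x y : E2, φ i (x + y) ≤ φ i x + φ i y)
    (hφ_hom : ∀ i, ∀ (c : ℝ) (x : E2), φ i (c • x) = |c| * φ i x)
    (hφ_pos : ∀ i, ∀ x : E2, φ i x = 0 → x = 0)
    (hφ_smooth : ∀ i, ContDiffOn ℝ 2 (φ i) {(0 : E2)}ᶜ)
    (σ β : Fin m → ℝ → E2)
    (hσ : ∀ i, ContDiffOn ℝ 2 (σ i) (Set.Icc 0 1))
    (hβ : ∀ i, ContDiffOn ℝ 2 (β i) (Set.Icc 0 1))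
    (hreg : ∀ i, ∀ x ∈ Set.Icc (0:ℝ) 1, derivWithin (σ i) (Set.Icc 0 1) x ≠ 0)
    (Q : E2) (hQ : ∀ i, σ i 1 = Q)
    (v : E2) (hβ0 : ∀ i, β i 0 = 0) (hβ1 : ∀ i, β i 1 = v) :
    HasDerivAt
      (fun s : ℝ => ∑ i, ∫ x in (0:ℝ)..1,
        φ i (perp (derivWithin (σ i) (Set.Icc 0 1) x + s • derivWithin (β i) (Set.Icc 0 1) x)))
      ((∑ i, ∫ x in (0:ℝ)..1,
          ⟪β i x, nor (σ i) x⟫ * curv (φ i) (σ i) x * ‖derivWithin (σ i) (Set.Icc 0 1) x‖)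
        - ⟪v, ∑ i, perp (CH (φ i) (σ i) 1)⟫) 0 := by
  have h : ∀ i ∈ Finset.univ, HasDerivAt
      (fun s : ℝ => ∫ x in (0:ℝ)..1,
        φ i (perp (derivWithin (σ i) (Set.Icc 0 1) x + s • derivWithin (β i) (Set.Icc 0 1) x)))
      ((∫ x in (0:ℝ)..1,
          ⟪β i x, nor (σ i) x⟫ * curv (φ i) (σ i) x * ‖derivWithin (σ i) (Set.Icc 0 1) x‖)
        - ⟪v, perp (CH (φ i) (σ i) 1)⟫) (0:ℝ) := fun i _ =>
    curve_var (φ i) (hφ_hom i) (hφ_smooth i) (σ i) (β i) (hσ i) (hβ i) (hreg i) v (hβ0 i) (hβ1 i)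
  have hsum := HasDerivAt.fun_sum h
  rw [Finset.sum_sub_distrib, ← inner_sum] at hsum
  exact hsum
end
end

section
/- Let ν', ν_J, ν'' ∈ ℝ² be unit vectors with det(ν', ν_J) ≠ 0 and det(ν'', ν_J) ≠ 0, let A, B ∈ ℝ² satisfy (B − A)·ν_J = 0, and let h', h_J, h'' ∈ ℝ. Let Ā be the unique point of ℝ² with (Ā − A)·ν' = h' and (Ā − A)·ν_J = h_J, and let B̄ be the unique point with (B̄ − B)·ν'' = h'' and (B̄ − B)·ν_J = h_J. Then (B̄ − Ā)·ν_J = 0, and setting τ_J := ν_J^⊥, (B̄ − Ā)·τ_J = (B − A)·τ_J + (h_J (ν''·ν_J) − h'')/det(ν'', ν_J) − (h_J (ν'·ν_J) − h')/det(ν', ν_J). -/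
noncomputable section
open Set

/-- `det(a,b) = a₁b₂ − a₂b₁` -/
def dett (a b : E2) : ℝ := a 0 * b 1 - a 1 * b 0

local notation "⟪" x ", " y "⟫" => @inner ℝ _ _ x y

lemma inner_coords (x y : E2) : ⟪x, y⟫ = x 0 * y 0 + x 1 * y 1 := by
  simp [PiLp.inner_apply, RCLike.inner_apply, Fin.sum_univ_two, mul_comm]

lemma exists_unique_sol (ν n : E2) (hd : dett ν n ≠ 0) (A : E2) (h hJ : ℝ) :
    ∃! P : E2, ⟪P - A, ν⟫ = h ∧ ⟪P - A, n⟫ = hJ := by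
  set d := dett ν n with hdd
  refine ⟨A + (WithLp.equiv 2 (Fin 2 → ℝ)).symm
      ![(h * n 1 - hJ * ν 1) / d, (hJ * ν 0 - h * n 0) / d], ⟨?_, ?_⟩, ?_⟩
  · rw [inner_coords]
    simp only [add_sub_cancel_left]
    show (h * n 1 - hJ * ν 1) / d * ν 0 + (hJ * ν 0 - h * n 0) / d * ν 1 = h
    field_simp
    simp only [hdd, dett]; ring
  · rw [inner_coords]
    simp only [add_sub_cancel_left]
    show (h * n 1 - hJ * ν 1) / d * n 0 + (hJ * ν 0 - h * n 0) / d * n 1 = hJ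
    field_simp
    simp only [hdd, dett]; ring
  · rintro P ⟨h1, h2⟩
    rw [inner_coords] at h1 h2
    simp only [PiLp.sub_apply] at h1 h2
    have hd' : ν 0 * n 1 - ν 1 * n 0 ≠ 0 := hd
    ext i
    fin_cases i
    · show P 0 = A 0 + (h * n 1 - hJ * ν 1) / d
      field_simp
      simp only [hdd, dett]
      linear_combination (n 1) * h1 - (ν 1) * h2
    · show P 1 = A 1 + (hJ * ν 0 - h * n 0) / d
      field_simp
      simp only [hdd, dett]
      linear_combination (ν 0) * h2 - (n 0) * h1

lemma key (ν n : E2) (hn : ‖n‖ = 1) (hd : dett ν n ≠ 0) (a : E2) (h hJ : ℝ)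
    (h1 : ⟪a, ν⟫ = h) (h2 : ⟪a, n⟫ = hJ) :
    ⟪a, perp n⟫ = (hJ * ⟪ν, n⟫ - h) / dett ν n := by
  have hn2 : n 0 ^ 2 + n 1 ^ 2 = 1 := by
    have := real_inner_self_eq_norm_sq n
    rw [inner_coords] at this; nlinarith
  rw [inner_coords] at h1 h2 ⊢
  rw [inner_coords]
  show a 0 * (-(n 1)) + a 1 * n 0 = (hJ * (ν 0 * n 0 + ν 1 * n 1) - h) / dett ν n
  rw [eq_div_iff hd]
  simp only [dett]
  linear_combination (ν 0 * n 0 + ν 1 * n 1) * h2 - h1 - (a 0 * ν 0 + a 1 * ν 1) * hn2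

/-- Proposition 4.3(a) of the paper: change of the signed length of a segment of a
polygonal network when the lines carrying it and its two neighbours are translated
by signed normal distances `h_J, h', h''`. -/
theorem length_change_of_parallel_segment
    (ν' νJ ν'' : E2) (hν' : ‖ν'‖ = 1) (hνJ : ‖νJ‖ = 1) (hν'' : ‖ν''‖ = 1)
    (hdet' : dett ν' νJ ≠ 0) (hdet'' : dett ν'' νJ ≠ 0)
    (A B : E2) (hAB : ⟪B - A, νJ⟫ = 0)
    (h' hJ h'' : ℝ) :
    (∃! P : E2, ⟪P - A, ν'⟫ = h' ∧ ⟪P - A, νJ⟫ = hJ) ∧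
    (∃! P : E2, ⟪P - B, ν''⟫ = h'' ∧ ⟪P - B, νJ⟫ = hJ) ∧
    ∀ Abar Bbar : E2,
      ⟪Abar - A, ν'⟫ = h' → ⟪Abar - A, νJ⟫ = hJ →
      ⟪Bbar - B, ν''⟫ = h'' → ⟪Bbar - B, νJ⟫ = hJ →
      ⟪Bbar - Abar, νJ⟫ = 0 ∧
      ⟪Bbar - Abar, perp νJ⟫ = ⟪B - A, perp νJ⟫
        + (hJ * ⟪ν'', νJ⟫ - h'') / dett ν'' νJ
        - (hJ * ⟪ν', νJ⟫ - h') / dett ν' νJ := by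
  refine ⟨exists_unique_sol ν' νJ hdet' A h' hJ,
    exists_unique_sol ν'' νJ hdet'' B h'' hJ, ?_⟩
  intro Abar Bbar ha1 ha2 hb1 hb2
  have hdecomp : Bbar - Abar = (B - A) + (Bbar - B) - (Abar - A) := by abel
  constructor
  · rw [hdecomp, inner_sub_left, inner_add_left, hAB, hb2, ha2]; ring
  · rw [hdecomp, inner_sub_left, inner_add_left,
      key ν'' νJ hνJ hdet'' _ h'' hJ hb1 hb2,
      key ν' νJ hνJ hdet' _ h' hJ ha1 ha2]
end
end
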